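/- Fix an integer t ≥ 2 and a real number κ > 0. Let (r_k) and (s_k) be sequences of positive integers with r_k → ∞, s_k → ∞, and s_k/r_k → κ. Then lim_{k→∞} (t/r_k) · (1/C(r_k+s_k, r_k)) · Σ_{λ ∈ Par_{r_k,s_k}} |core_t(λ)| = C(t,2) · κ/(1+κ), i.e., the expectation of t·|core_t(λ)|/r_k for a uniformly random λ ∈ Par_{r_k,s_k} converges to (t(t−1)/2) · κ/(1+κ). -/

import Mathlib

open Finset

/-- Partitions in the `r × s` rectangle: weakly decreasing `r`-tuples with parts at most `s`. -/
def IsRectPartition (r s : ℕ) (lam : Fin r → ℕ) : Prop :=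
  (∀ i j : Fin r, i ≤ j → lam j ≤ lam i) ∧ ∀ i, lam i ≤ s

/-- The beta-set `β(λ) = {λ_i + r − i : 1 ≤ i ≤ r}` (with 0-indexed `i`). -/
def betaSet (r : ℕ) (lam : Fin r → ℕ) : Finset ℕ :=
  Finset.image (fun i : Fin r => lam i + (r - 1 - (i : ℕ))) Finset.univ

/-- `λ` is a `t`-core: for every `b ∈ β(λ)` with `b ≥ t`, also `b − t ∈ β(λ)`. -/
def IsTCore (r t : ℕ) (lam : Fin r → ℕ) : Prop :=
  ∀ b ∈ betaSet r lam, t ≤ b → b - t ∈ betaSet r lam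

/-- `n_i = ⌊(r+s+t−1−i)/t⌋`. -/
def nres (r s t i : ℕ) : ℕ := (r + s + t - 1 - i) / t

/-- `a_i(λ) = #{b ∈ β(λ) : b ≡ i (mod t)}`. -/
def aCount (r t : ℕ) (lam : Fin r → ℕ) (i : ℕ) : ℕ :=
  ((betaSet r lam).filter fun b => b % t = i).card

/-- The justification `J(λ)`: in each residue class `i` mod `t`, the `a_i(λ)` smallest
nonnegative integers congruent to `i`. -/
def justification (r t : ℕ) (lam : Fin r → ℕ) : Finset ℕ :=
  (Finset.range t).biUnion fun i =>
    (Finset.range (aCount r t lam i)).image fun m => i + m * t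

/-- The size of the `t`-core of `λ`: `Σ_{b ∈ J(λ)} b − r(r−1)/2`. -/
def coreSize (r t : ℕ) (lam : Fin r → ℕ) : ℕ :=
  (∑ b ∈ justification r t lam, b) - r * (r - 1) / 2

/-- For a strictly monotone `f : Fin n → ℕ`, values grow at least as fast as indices. -/
lemma strictMono_fin_gap {n : ℕ} {f : Fin n → ℕ} (hf : StrictMono f) :
    ∀ (d : ℕ) (a b : Fin n), (b : ℕ) = (a : ℕ) + d → f a + d ≤ f b := by
  intro d
  induction d with
  | zero => intro a b hab; have : a = b := Fin.ext (by omega); simp [this]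
  | succ d ih =>
    intro a b hab
    have hb' : ((a : ℕ) + d) < n := by omega
    have h1 := ih a ⟨(a : ℕ) + d, hb'⟩ rfl
    have h2 : f ⟨(a : ℕ) + d, hb'⟩ < f b := hf (by simp [Fin.lt_def]; omega)
    omega

lemma strictMono_fin_le {n : ℕ} {f : Fin n → ℕ} (hf : StrictMono f) (j : Fin n) :
    (j : ℕ) ≤ f j := by
  have h0 : (0 : ℕ) < n := j.pos
  have := strictMono_fin_gap hf (j : ℕ) ⟨0, h0⟩ j (by simp)
  omega

lemma image_orderEmbOfFin (J : Finset ℕ) {k : ℕ} (h : J.card = k) :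
    Finset.image (J.orderEmbOfFin h) Finset.univ = J := by
  apply Finset.coe_injective
  rw [coe_image, coe_univ, Set.image_univ]
  exact Finset.range_orderEmbOfFin J h

/-- Sum of a finset of naturals is at least `0 + 1 + ⋯ + (card − 1)`. -/
lemma sum_range_card_le (J : Finset ℕ) : ∑ j ∈ range J.card, j ≤ ∑ b ∈ J, b := by
  set e := J.orderEmbOfFin rfl with he
  have hinj : Function.Injective e := e.injective
  calc ∑ j ∈ range J.card, j = ∑ j : Fin J.card, (j : ℕ) :=
        (Fin.sum_univ_eq_sum_range (fun j => j) J.card).symm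
    _ ≤ ∑ j : Fin J.card, e j :=
        Finset.sum_le_sum fun j _ => strictMono_fin_le e.strictMono j
    _ = ∑ b ∈ J, b := by
        conv_rhs => rw [← image_orderEmbOfFin J rfl]
        rw [Finset.sum_image fun a _ b _ hab => hinj hab]

/-- Membership criterion for residue classes within `range (r+s)`. -/
lemma lt_iff_lt_nres {r s t i : ℕ} (ht0 : 0 < t) (hi : i < t) (m : ℕ) :
    i + m * t < r + s ↔ m < nres r s t i := by
  unfold nres
  have hdiv : m + 1 ≤ (r + s + t - 1 - i) / t ↔ m * t + t ≤ r + s + t - 1 - i := by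
    rw [Nat.le_div_iff_mul_le ht0, add_mul, one_mul]
  generalize m * t = x at *
  generalize (r + s + t - 1 - i) / t = y at *
  omega

/-- The residue class of `i` mod `t` inside `range N`. -/
def Rres (N t i : ℕ) : Finset ℕ := (range N).filter (fun b => b % t = i)

lemma mem_image_res {t i : ℕ} (ht0 : 0 < t) (hi : i < t) {n b : ℕ}
    (hb : b ∈ (range n).image (fun m => i + m * t)) : b % t = i := by
  simp only [mem_image, mem_range] at hb
  obtain ⟨m, _, rfl⟩ := hb
  rw [Nat.add_mul_mod_self_right, Nat.mod_eq_of_lt hi]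

lemma Rres_eq_image {r s t i : ℕ} (ht0 : 0 < t) (hi : i < t) :
    Rres (r + s) t i = (range (nres r s t i)).image (fun m => i + m * t) := by
  ext b
  simp only [Rres, mem_filter, mem_range, mem_image]
  constructor
  · rintro ⟨hb, hmod⟩
    refine ⟨b / t, ?_, ?_⟩
    · rw [← lt_iff_lt_nres ht0 hi]
      have h := Nat.mod_add_div' b t
      generalize b / t * t = x at *
      omega
    · have h := Nat.mod_add_div' b t
      generalize b / t * t = x at *
      omega
  · rintro ⟨m, hm, rfl⟩
    refine ⟨(lt_iff_lt_nres ht0 hi m).2 hm, ?_⟩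
    rw [Nat.add_mul_mod_self_right, Nat.mod_eq_of_lt hi]

lemma res_inj {t i : ℕ} (ht0 : 0 < t) : Function.Injective (fun m => i + m * t) := by
  intro a b hab
  simp only at hab
  exact Nat.eq_of_mul_eq_mul_right ht0 (Nat.add_left_cancel hab)

lemma card_Rres {r s t i : ℕ} (ht0 : 0 < t) (hi : i < t) :
    (Rres (r + s) t i).card = nres r s t i := by
  rw [Rres_eq_image ht0 hi, Finset.card_image_of_injective _ (res_inj ht0), card_range]

lemma range_eq_biUnion_Rres {N t : ℕ} (ht0 : 0 < t) :
    range N = (range t).biUnion (fun i => Rres N t i) := by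
  exact (Finset.biUnion_filter_eq_of_maps_to
    (fun b _ => Finset.mem_range.2 (Nat.mod_lt b ht0))).symm

lemma pairwiseDisjoint_Rres {N t : ℕ} :
    (↑(range t) : Set ℕ).PairwiseDisjoint (fun i => Rres N t i) := by
  intro i _ j _ hij
  simp only [Function.onFun]
  rw [Finset.disjoint_left]
  intro b hb hb'
  simp only [Rres, mem_filter] at hb hb'
  exact hij (hb.2 ▸ hb'.2.symm ▸ rfl)

lemma sum_twice_image_res {t i : ℕ} (ht0 : 0 < t) (n : ℕ) :
    ∑ b ∈ (range n).image (fun m => i + m * t), 2 * b = 2 * i * n + t * (n * (n - 1)) := by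
  have ht0' : ∀ m, (2 : ℕ) * (i + m * t) = 2 * i + m * (2 * t) := by intro m; ring
  rw [Finset.sum_image (fun a _ b _ hab => res_inj ht0 hab)]
  calc ∑ m ∈ range n, 2 * (i + m * t)
      = ∑ m ∈ range n, (2 * i + m * (2 * t)) := Finset.sum_congr rfl fun m _ => ht0' m
    _ = n * (2 * i) + (∑ m ∈ range n, m) * (2 * t) := by
        rw [Finset.sum_add_distrib, Finset.sum_const, smul_eq_mul, ← Finset.sum_mul,
          Finset.card_range]
    _ = n * (2 * i) + ((∑ m ∈ range n, m) * 2) * t := by ring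
    _ = 2 * i * n + t * (n * (n - 1)) := by rw [Finset.sum_range_id_mul_two]; ring

/-- Key identity: `Σ_i (2 i n_i + t n_i (n_i − 1)) = N (N−1)` where `N = r + s`. -/
lemma key_identity {r s t : ℕ} (ht0 : 0 < t) :
    ∑ i ∈ range t, (2 * i * nres r s t i + t * (nres r s t i * (nres r s t i - 1)))
      = (r + s) * (r + s - 1) := by
  have h1 : ∑ b ∈ range (r + s), 2 * b = (r + s) * (r + s - 1) := by
    rw [← Finset.sum_range_id_mul_two (r + s), Finset.sum_mul]
    exact Finset.sum_congr rfl fun b _ => mul_comm 2 b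
  rw [← h1, range_eq_biUnion_Rres (N := r + s) ht0,
    Finset.sum_biUnion pairwiseDisjoint_Rres]
  refine Finset.sum_congr rfl fun i hi => ?_
  rw [Rres_eq_image ht0 (Finset.mem_range.1 hi), sum_twice_image_res ht0]

/-- The number of `k`-subsets of `u` containing a fixed subset `v`. -/
lemma count_containing {u v : Finset ℕ} (hvu : v ⊆ u) {k : ℕ} (hk : v.card ≤ k) :
    ((u.powersetCard k).filter fun B => v ⊆ B).card
      = (u.card - v.card).choose (k - v.card) := by
  have h : ((u.powersetCard k).filter fun B => v ⊆ B).card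
      = ((u \ v).powersetCard (k - v.card)).card := by
    apply Finset.card_nbij' (fun B => B \ v) (fun C => C ∪ v)
    · intro B hB
      simp only [Finset.mem_coe, Finset.mem_filter, Finset.mem_powersetCard] at hB ⊢
      obtain ⟨⟨hBu, hBcard⟩, hvB⟩ := hB
      exact ⟨Finset.sdiff_subset_sdiff hBu (le_refl v),
        by rw [Finset.card_sdiff_of_subset hvB, hBcard]⟩
    · intro C hC
      simp only [Finset.mem_coe, Finset.mem_powersetCard, Finset.mem_filter] at hC ⊢
      obtain ⟨hCuv, hCcard⟩ := hC
      have hdisj : Disjoint C v :=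
        Finset.disjoint_of_subset_left hCuv Finset.sdiff_disjoint
      refine ⟨⟨Finset.union_subset (hCuv.trans Finset.sdiff_subset) hvu, ?_⟩,
        Finset.subset_union_right⟩
      rw [Finset.card_union_of_disjoint hdisj, hCcard]
      omega
    · intro B hB
      simp only [Finset.mem_coe, Finset.mem_filter] at hB
      exact Finset.sdiff_union_of_subset hB.2
    · intro C hC
      simp only [Finset.mem_coe, Finset.mem_powersetCard] at hC
      beta_reduce
      rw [Finset.union_sdiff_distrib, Finset.sdiff_self, Finset.union_empty,
        Finset.sdiff_eq_self_of_disjoint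
          (Finset.disjoint_of_subset_left hC.1 Finset.sdiff_disjoint)]
  rw [h, Finset.card_powersetCard, Finset.card_sdiff_of_subset hvu]

lemma mul_self_sub_self (a : ℕ) : a * a - a = a * (a - 1) := by
  cases a with
  | zero => simp
  | succ n => rw [Nat.succ_sub_one, Nat.succ_mul, Nat.add_sub_cancel, Nat.mul_comm]

lemma filter_of_subset_range {N t i : ℕ} {B : Finset ℕ} (hB : B ⊆ range N) :
    B.filter (fun b => b % t = i) = (Rres N t i).filter (fun b => b ∈ B) := by
  ext b
  simp only [Finset.mem_filter, Rres]
  constructor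
  · rintro ⟨hbB, hmod⟩; exact ⟨⟨hB hbB, hmod⟩, hbB⟩
  · rintro ⟨⟨_, hmod⟩, hbB⟩; exact ⟨hbB, hmod⟩

lemma sum_acount {r s t i : ℕ} (ht0 : 0 < t) (hi : i < t) (hr : 1 ≤ r) :
    ∑ B ∈ (range (r + s)).powersetCard r, (B.filter fun b => b % t = i).card
      = nres r s t i * (r + s - 1).choose (r - 1) := by
  classical
  rw [Finset.sum_congr rfl (fun B hB => by
    rw [filter_of_subset_range (Finset.mem_powersetCard.1 hB).1, Finset.card_filter])]
  rw [Finset.sum_comm]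
  have hinner : ∀ b ∈ Rres (r + s) t i,
      (∑ B ∈ (range (r + s)).powersetCard r, if b ∈ B then 1 else 0)
        = (r + s - 1).choose (r - 1) := by
    intro b hb
    have hbN : b ∈ range (r + s) := (Finset.mem_filter.1 hb).1
    rw [← Finset.card_filter]
    have : ((range (r + s)).powersetCard r).filter (fun B => b ∈ B)
        = ((range (r + s)).powersetCard r).filter (fun B => {b} ⊆ B) := by
      apply Finset.filter_congr; intro B _; rw [Finset.singleton_subset_iff]
    rw [this, count_containing (Finset.singleton_subset_iff.2 hbN)
      (by rw [Finset.card_singleton]; omega), Finset.card_singleton, Finset.card_range]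
  rw [Finset.sum_congr rfl hinner, Finset.sum_const, smul_eq_mul, card_Rres ht0 hi]

lemma sum_acount_pairs {r s t i : ℕ} (ht0 : 0 < t) (hi : i < t) (hr : 2 ≤ r) :
    ∑ B ∈ (range (r + s)).powersetCard r,
        (B.filter fun b => b % t = i).card * ((B.filter fun b => b % t = i).card - 1)
      = nres r s t i * (nres r s t i - 1) * (r + s - 2).choose (r - 2) := by
  classical
  have hstep : ∀ B ∈ (range (r + s)).powersetCard r,
      (B.filter fun b => b % t = i).card * ((B.filter fun b => b % t = i).card - 1)
        = ∑ p ∈ (Rres (r + s) t i).offDiag, (if p.1 ∈ B ∧ p.2 ∈ B then 1 else 0) := by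
    intro B hB
    have hBr := (Finset.mem_powersetCard.1 hB).1
    have hoff : (B.filter fun b => b % t = i).offDiag
        = (Rres (r + s) t i).offDiag.filter (fun p => p.1 ∈ B ∧ p.2 ∈ B) := by
      ext p
      simp only [Finset.mem_offDiag, Finset.mem_filter, Rres, Finset.mem_range]
      constructor
      · rintro ⟨⟨h1B, h1m⟩, ⟨h2B, h2m⟩, hne⟩
        exact ⟨⟨⟨Finset.mem_range.1 (hBr h1B), h1m⟩,
          ⟨Finset.mem_range.1 (hBr h2B), h2m⟩, hne⟩, h1B, h2B⟩
      · rintro ⟨⟨⟨_, h1m⟩, ⟨_, h2m⟩, hne⟩, h1B, h2B⟩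
        exact ⟨⟨h1B, h1m⟩, ⟨h2B, h2m⟩, hne⟩
    have hcard := Finset.offDiag_card (B.filter fun b => b % t = i)
    have : (B.filter fun b => b % t = i).card * ((B.filter fun b => b % t = i).card - 1)
        = (B.filter fun b => b % t = i).offDiag.card := by
      rw [hcard, mul_self_sub_self]
    rw [this, hoff, Finset.card_filter]
  rw [Finset.sum_congr rfl hstep, Finset.sum_comm]
  have hinner : ∀ p ∈ (Rres (r + s) t i).offDiag,
      (∑ B ∈ (range (r + s)).powersetCard r, if p.1 ∈ B ∧ p.2 ∈ B then 1 else 0)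
        = (r + s - 2).choose (r - 2) := by
    intro p hp
    obtain ⟨hp1, hp2, hpne⟩ := Finset.mem_offDiag.1 hp
    have hp1N : p.1 ∈ range (r + s) := (Finset.mem_filter.1 hp1).1
    have hp2N : p.2 ∈ range (r + s) := (Finset.mem_filter.1 hp2).1
    rw [← Finset.card_filter]
    have : ((range (r + s)).powersetCard r).filter (fun B => p.1 ∈ B ∧ p.2 ∈ B)
        = ((range (r + s)).powersetCard r).filter (fun B => ({p.1, p.2} : Finset ℕ) ⊆ B) := by
      apply Finset.filter_congr; intro B _
      rw [Finset.insert_subset_iff, Finset.singleton_subset_iff]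
    have hvcard : ({p.1, p.2} : Finset ℕ).card = 2 := by
      rw [Finset.card_insert_of_notMem (by simp [hpne]), Finset.card_singleton]
    rw [this, count_containing
      (Finset.insert_subset hp1N (Finset.singleton_subset_iff.2 hp2N))
      (by rw [hvcard]; omega), hvcard, Finset.card_range]
  rw [Finset.sum_congr rfl hinner, Finset.sum_const, smul_eq_mul, Finset.offDiag_card,
    card_Rres ht0 hi]
  rw [mul_self_sub_self]

/-- The justification sum as a function of the beta-set. -/
def sumJB (r t : ℕ) (B : Finset ℕ) : ℕ :=
  ∑ i ∈ range t, ∑ m ∈ range ((B.filter fun b => b % t = i).card), (i + m * t)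

lemma two_mul_sum_range_aff {t : ℕ} (ht0 : 0 < t) (i a : ℕ) :
    2 * ∑ m ∈ range a, (i + m * t) = 2 * i * a + t * (a * (a - 1)) := by
  have h := sum_twice_image_res (t := t) (i := i) ht0 a
  rw [Finset.sum_image (fun x _ y _ hxy => res_inj ht0 hxy)] at h
  rw [Finset.mul_sum]
  exact h

/-- Doubled total of the justification sums over all `r`-subsets of `range (r+s)`. -/
lemma sum_sumJ {r s t : ℕ} (ht0 : 0 < t) (hr : 2 ≤ r) :
    2 * ∑ B ∈ (range (r + s)).powersetCard r, sumJB r t B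
      = 2 * (∑ i ∈ range t, i * nres r s t i) * (r + s - 1).choose (r - 1)
        + t * (∑ i ∈ range t, nres r s t i * (nres r s t i - 1))
            * (r + s - 2).choose (r - 2) := by
  have hI : ∀ i ∈ range t,
      ∑ B ∈ (range (r + s)).powersetCard r,
          2 * ∑ m ∈ range ((B.filter fun b => b % t = i).card), (i + m * t)
        = 2 * i * (nres r s t i * (r + s - 1).choose (r - 1))
          + t * (nres r s t i * (nres r s t i - 1) * (r + s - 2).choose (r - 2)) := by
    intro i hi
    rw [Finset.sum_congr rfl (fun B _ =>
      two_mul_sum_range_aff ht0 i ((B.filter fun b => b % t = i).card))]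
    rw [Finset.sum_add_distrib, ← Finset.mul_sum, ← Finset.mul_sum]
    rw [sum_acount ht0 (Finset.mem_range.1 hi) (by omega),
      sum_acount_pairs ht0 (Finset.mem_range.1 hi) hr]
  unfold sumJB
  calc 2 * ∑ B ∈ (range (r + s)).powersetCard r,
        ∑ i ∈ range t, ∑ m ∈ range ((B.filter fun b => b % t = i).card), (i + m * t)
      = ∑ B ∈ (range (r + s)).powersetCard r, ∑ i ∈ range t,
          2 * ∑ m ∈ range ((B.filter fun b => b % t = i).card), (i + m * t) := by
        rw [Finset.mul_sum]
        exact Finset.sum_congr rfl fun B _ => Finset.mul_sum _ _ _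
    _ = ∑ i ∈ range t, ∑ B ∈ (range (r + s)).powersetCard r,
          2 * ∑ m ∈ range ((B.filter fun b => b % t = i).card), (i + m * t) :=
        Finset.sum_comm
    _ = ∑ i ∈ range t,
          (2 * i * (nres r s t i * (r + s - 1).choose (r - 1))
            + t * (nres r s t i * (nres r s t i - 1) * (r + s - 2).choose (r - 2))) :=
        Finset.sum_congr rfl hI
    _ = 2 * (∑ i ∈ range t, i * nres r s t i) * (r + s - 1).choose (r - 1)
        + t * (∑ i ∈ range t, nres r s t i * (nres r s t i - 1))
            * (r + s - 2).choose (r - 2) := by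
        rw [Finset.sum_add_distrib]
        congr 1
        · rw [Finset.mul_sum, Finset.sum_mul]
          exact Finset.sum_congr rfl fun i _ => by ring
        · rw [Finset.mul_sum, Finset.sum_mul]
          exact Finset.sum_congr rfl fun i _ => by ring

/-- The beta-set listed in increasing order. -/
def bmap (r : ℕ) (lam : Fin r → ℕ) : Fin r → ℕ := fun j => lam (Fin.rev j) + (j : ℕ)

lemma betaSet_eq_image (r : ℕ) (lam : Fin r → ℕ) :
    betaSet r lam = Finset.image (bmap r lam) Finset.univ := by
  unfold betaSet bmap
  ext b
  simp only [Finset.mem_image, Finset.mem_univ, true_and]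
  constructor
  · rintro ⟨i, rfl⟩
    refine ⟨Fin.rev i, ?_⟩
    rw [Fin.rev_rev]
    congr 1
    rw [Fin.val_rev]
    omega
  · rintro ⟨j, rfl⟩
    refine ⟨Fin.rev j, ?_⟩
    congr 1
    rw [Fin.val_rev]
    have := j.isLt
    omega

lemma bmap_strictMono {r : ℕ} {lam : Fin r → ℕ}
    (h : ∀ i j : Fin r, i ≤ j → lam j ≤ lam i) : StrictMono (bmap r lam) := by
  intro j j' hjj'
  unfold bmap
  have h1 : Fin.rev j' ≤ Fin.rev j := by
    rw [Fin.rev_le_rev]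
    exact le_of_lt hjj'
  have h2 : lam (Fin.rev j) ≤ lam (Fin.rev j') := h _ _ h1
  have h3 : (j : ℕ) < (j' : ℕ) := hjj'
  omega

lemma betaSet_mem_powersetCard {r s : ℕ} (hr : 1 ≤ r) {lam : Fin r → ℕ}
    (hlam : IsRectPartition r s lam) :
    betaSet r lam ∈ (range (r + s)).powersetCard r := by
  rw [Finset.mem_powersetCard]
  constructor
  · intro b hb
    unfold betaSet at hb
    simp only [Finset.mem_image, Finset.mem_univ, true_and] at hb
    obtain ⟨i, rfl⟩ := hb
    have h1 := hlam.2 i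
    rw [Finset.mem_range]
    omega
  · rw [betaSet_eq_image,
      Finset.card_image_of_injective _ (bmap_strictMono hlam.1).injective,
      Finset.card_univ, Fintype.card_fin]

lemma bmap_eq_orderEmbOfFin {r : ℕ} {lam : Fin r → ℕ}
    (hmono : ∀ i j : Fin r, i ≤ j → lam j ≤ lam i)
    (hcard : (betaSet r lam).card = r) :
    bmap r lam = (betaSet r lam).orderEmbOfFin hcard := by
  apply Finset.orderEmbOfFin_unique
  · intro j
    rw [betaSet_eq_image]
    exact Finset.mem_image_of_mem _ (Finset.mem_univ j)
  · exact bmap_strictMono hmono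

lemma lam_eq_of_bmap_eq {r : ℕ} {lam lam' : Fin r → ℕ}
    (h : bmap r lam = bmap r lam') : lam = lam' := by
  funext i
  have := congrFun h (Fin.rev i)
  unfold bmap at this
  rw [Fin.rev_rev] at this
  omega

/-- The beta-set map is a bijection from rectangle partitions onto `r`-subsets of
`range (r+s)`. -/
lemma betaSet_bijOn (r s : ℕ) (hr : 1 ≤ r) :
    Set.BijOn (betaSet r) {lam : Fin r → ℕ | IsRectPartition r s lam}
      ↑((range (r + s)).powersetCard r) := by
  refine ⟨?_, ?_, ?_⟩
  · intro lam hlam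
    exact Finset.mem_coe.2 (betaSet_mem_powersetCard hr hlam)
  · intro lam hlam lam' hlam' heq
    have hcard : (betaSet r lam).card = r :=
      (Finset.mem_powersetCard.1 (betaSet_mem_powersetCard hr hlam)).2
    have hcard' : (betaSet r lam').card = r :=
      (Finset.mem_powersetCard.1 (betaSet_mem_powersetCard hr hlam')).2
    have h1 := bmap_eq_orderEmbOfFin hlam.1 hcard
    have h2 : bmap r lam' = ⇑((betaSet r lam).orderEmbOfFin hcard) := by
      apply Finset.orderEmbOfFin_unique
      · intro j
        rw [heq, betaSet_eq_image]
        exact Finset.mem_image_of_mem _ (Finset.mem_univ j)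
      · exact bmap_strictMono hlam'.1
    exact lam_eq_of_bmap_eq (h1.trans h2.symm)
  · intro B hB
    have hB' := Finset.mem_coe.1 hB
    rw [Finset.mem_powersetCard] at hB'
    obtain ⟨hBsub, hBcard⟩ := hB'
    set e := B.orderEmbOfFin hBcard with he
    have hle : ∀ j : Fin r, (j : ℕ) ≤ e j := fun j => strictMono_fin_le e.strictMono j
    have hub : ∀ j : Fin r, e j + (r - 1 - (j : ℕ)) ≤ r + s - 1 := by
      intro j
      have hlast : (r - 1) < r := by omega
      have hgap := strictMono_fin_gap e.strictMono (r - 1 - (j : ℕ)) j ⟨r - 1, hlast⟩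
        (by simp; omega)
      have hmem : e ⟨r - 1, hlast⟩ ∈ B := Finset.orderEmbOfFin_mem B hBcard _
      have := Finset.mem_range.1 (hBsub hmem)
      omega
    refine ⟨fun i => e (Fin.rev i) - ((Fin.rev i : Fin r) : ℕ), ⟨⟨?_, ?_⟩, ?_⟩⟩
    · intro i i' hii'
      show e (Fin.rev i') - ((Fin.rev i' : Fin r) : ℕ) ≤ e (Fin.rev i) - ((Fin.rev i : Fin r) : ℕ)
      have hab : ((Fin.rev i' : Fin r) : ℕ) ≤ ((Fin.rev i : Fin r) : ℕ) := by
        rw [show ((Fin.rev i' : Fin r) : ℕ) ≤ ((Fin.rev i : Fin r) : ℕ)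
            ↔ Fin.rev i' ≤ Fin.rev i from Iff.rfl, Fin.rev_le_rev]
        exact hii'
      have hgap := strictMono_fin_gap e.strictMono
        (((Fin.rev i : Fin r) : ℕ) - ((Fin.rev i' : Fin r) : ℕ))
        (Fin.rev i') (Fin.rev i) (by omega)
      have h1 := hle (Fin.rev i')
      omega
    · intro i
      show e (Fin.rev i) - ((Fin.rev i : Fin r) : ℕ) ≤ s
      have h1 := hub (Fin.rev i)
      have h2 := hle (Fin.rev i)
      have h3 : ((Fin.rev i : Fin r) : ℕ) ≤ r - 1 := by
        have := (Fin.rev i).isLt; omega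
      omega
    · show betaSet r _ = B
      rw [betaSet_eq_image]
      have hfun : bmap r (fun i => e (Fin.rev i) - ((Fin.rev i : Fin r) : ℕ)) = ⇑e := by
        funext j
        unfold bmap
        simp only [Fin.rev_rev]
        have := hle j
        omega
      rw [hfun]
      exact image_orderEmbOfFin B hBcard

lemma pairwiseDisjoint_image_res {t : ℕ} (ht0 : 0 < t) (f : ℕ → ℕ) :
    (↑(range t) : Set ℕ).PairwiseDisjoint
      (fun i => (range (f i)).image (fun m => i + m * t)) := by
  intro i hi j hj hij
  simp only [Function.onFun]
  rw [Finset.disjoint_left]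
  intro b hb hb'
  exact hij ((mem_image_res ht0 (Finset.mem_range.1 (Finset.mem_coe.1 hi)) hb).symm.trans
    (mem_image_res ht0 (Finset.mem_range.1 (Finset.mem_coe.1 hj)) hb'))

lemma justification_eq_sumJB {r t : ℕ} (ht0 : 0 < t) (lam : Fin r → ℕ) :
    ∑ b ∈ justification r t lam, b = sumJB r t (betaSet r lam) := by
  unfold justification sumJB aCount
  rw [Finset.sum_biUnion (pairwiseDisjoint_image_res ht0 _)]
  exact Finset.sum_congr rfl fun i hi =>
    Finset.sum_image (fun a _ b _ h => res_inj ht0 h)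

lemma justification_card {r t : ℕ} (ht0 : 0 < t) (lam : Fin r → ℕ) :
    (justification r t lam).card = (betaSet r lam).card := by
  unfold justification
  rw [Finset.card_biUnion (fun i hi j hj hij =>
    pairwiseDisjoint_image_res ht0 (fun i => aCount r t lam i)
      (Finset.mem_coe.2 hi) (Finset.mem_coe.2 hj) hij)]
  rw [Finset.sum_congr rfl (fun i _ => by
    rw [Finset.card_image_of_injective _ (res_inj ht0), Finset.card_range])]
  unfold aCount
  exact (Finset.card_eq_sum_card_fiberwise
    (fun b _ => Finset.mem_range.2 (Nat.mod_lt b ht0))).symm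

lemma justification_sum_ge {r s t : ℕ} (ht0 : 0 < t) (hr : 1 ≤ r) {lam : Fin r → ℕ}
    (hlam : IsRectPartition r s lam) :
    r * (r - 1) / 2 ≤ ∑ b ∈ justification r t lam, b := by
  have h1 := sum_range_card_le (justification r t lam)
  have hcard : (justification r t lam).card = r := by
    rw [justification_card ht0 lam]
    exact (Finset.mem_powersetCard.1 (betaSet_mem_powersetCard hr hlam)).2
  rw [hcard, Finset.sum_range_id] at h1
  exact h1

/-- Transport the finsum over partitions to a finset sum over `r`-subsets. -/
lemma finsum_core_eq {r s t : ℕ} (ht0 : 0 < t) (hr : 1 ≤ r) :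
    ∑ᶠ lam ∈ {lam : Fin r → ℕ | IsRectPartition r s lam}, (coreSize r t lam : ℝ)
      = ∑ B ∈ (range (r + s)).powersetCard r,
          ((sumJB r t B : ℝ) - ((r * (r - 1) / 2 : ℕ) : ℝ)) := by
  rw [finsum_mem_eq_of_bijOn (betaSet r) (betaSet_bijOn r s hr) (fun lam hlam => ?_)]
  · exact finsum_mem_coe_finset _ _
  · show (coreSize r t lam : ℝ) = _
    unfold coreSize
    rw [Nat.cast_sub (justification_sum_ge ht0 hr hlam), justification_eq_sumJB ht0 lam]

/-- Exact formula for the scaled expected core size. -/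
lemma expectation_formula {r s t : ℕ} (ht : 2 ≤ t) (hr : 2 ≤ r) (hs : 1 ≤ s) :
    ((t : ℝ) / r) * ((1 / (((r + s).choose r : ℕ) : ℝ)) *
      ∑ᶠ lam ∈ {lam : Fin r → ℕ | IsRectPartition r s lam}, (coreSize r t lam : ℝ))
    = ((t : ℝ) * ((∑ i ∈ range t, i * nres r s t i : ℕ) : ℝ) / ((r : ℝ) + s))
      * ((s : ℝ) / ((r : ℝ) + s - 1)) := by
  have ht0 : 0 < t := by omega
  rw [finsum_core_eq ht0 (by omega), Finset.sum_sub_distrib, Finset.sum_const,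
    Finset.card_powersetCard, Finset.card_range, ← Nat.cast_sum, nsmul_eq_mul]
  have hkey : 2 * (∑ i ∈ range t, i * nres r s t i)
      + t * (∑ i ∈ range t, nres r s t i * (nres r s t i - 1)) = (r + s) * (r + s - 1) := by
    have h := key_identity (r := r) (s := s) ht0
    rw [Finset.sum_add_distrib] at h
    have h1 : ∑ i ∈ range t, 2 * i * nres r s t i
        = 2 * ∑ i ∈ range t, i * nres r s t i := by
      rw [Finset.mul_sum]
      exact Finset.sum_congr rfl fun i _ => by ring
    have h2 : ∑ i ∈ range t, t * (nres r s t i * (nres r s t i - 1))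
        = t * ∑ i ∈ range t, nres r s t i * (nres r s t i - 1) := by
      rw [Finset.mul_sum]
    rw [h1, h2] at h
    exact h
  have h2sum := sum_sumJ (r := r) (s := s) ht0 hr
  have hchoose1 : (r + s) * (r + s - 1).choose (r - 1) = (r + s).choose r * r := by
    have h := Nat.add_one_mul_choose_eq (r + s - 1) (r - 1)
    rw [show r + s - 1 + 1 = r + s from by omega, show r - 1 + 1 = r from by omega] at h
    exact h
  have hchoose2 : (r + s - 1) * (r + s - 2).choose (r - 2)
      = (r + s - 1).choose (r - 1) * (r - 1) := by
    have h := Nat.add_one_mul_choose_eq (r + s - 2) (r - 2)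
    rw [show r + s - 2 + 1 = r + s - 1 from by omega,
      show r - 2 + 1 = r - 1 from by omega] at h
    exact h
  have heven : r * (r - 1) / 2 * 2 = r * (r - 1) := by
    apply Nat.div_mul_cancel
    have h := (Nat.even_mul_succ_self (r - 1)).two_dvd
    rw [show r - 1 + 1 = r from by omega] at h
    rwa [mul_comm]
  have hA := congrArg (Nat.cast : ℕ → ℝ) h2sum
  have hB := congrArg (Nat.cast : ℕ → ℝ) hkey
  have hC := congrArg (Nat.cast : ℕ → ℝ) hchoose1
  have hD := congrArg (Nat.cast : ℕ → ℝ) hchoose2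
  have hE := congrArg (Nat.cast : ℕ → ℝ) heven
  push_cast at hA hB hC hD hE ⊢
  have hcastN1 : ((r + s - 1 : ℕ) : ℝ) = (r : ℝ) + s - 1 := by
    rw [Nat.cast_sub (by omega : 1 ≤ r + s)]; push_cast; ring
  have hcastr1 : ((r - 1 : ℕ) : ℝ) = (r : ℝ) - 1 := by
    rw [Nat.cast_sub (by omega : 1 ≤ r)]; push_cast; ring
  rw [hcastN1] at hB hD
  rw [hcastr1] at hD hE
  have hr0 : (r : ℝ) ≠ 0 := by positivity
  have ht0' : (t : ℝ) ≠ 0 := by positivity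
  have hN0 : (r : ℝ) + s ≠ 0 := by positivity
  have hN1 : (r : ℝ) + s - 1 ≠ 0 := by
    have h1 : (2 : ℝ) ≤ (r : ℝ) := by exact_mod_cast hr
    have h2 : (0 : ℝ) ≤ (s : ℝ) := by positivity
    nlinarith
  have hc00 : (((r + s).choose r : ℕ) : ℝ) ≠ 0 := by
    exact_mod_cast (Nat.choose_pos (by omega : r ≤ r + s)).ne'
  have hc1' : (((r + s - 1).choose (r - 1) : ℕ) : ℝ)
      = (((r + s).choose r : ℕ) : ℝ) * r / ((r : ℝ) + s) := by
    field_simp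
    linear_combination hC
  have hc2' : (((r + s - 2).choose (r - 2) : ℕ) : ℝ)
      = (((r + s - 1).choose (r - 1) : ℕ) : ℝ) * ((r : ℝ) - 1) / ((r : ℝ) + s - 1) := by
    field_simp
    linear_combination hD
  have hP' : (∑ x ∈ Finset.range t, ((nres r s t x : ℕ) : ℝ) * ((nres r s t x - 1 : ℕ) : ℝ))
      = (((r : ℝ) + s) * ((r : ℝ) + s - 1)
          - 2 * ∑ x ∈ Finset.range t, (x : ℝ) * ((nres r s t x : ℕ) : ℝ)) / t := by
    field_simp
    linear_combination hB
  have hg : ((r * (r - 1) / 2 : ℕ) : ℝ) = (r : ℝ) * ((r : ℝ) - 1) / 2 := by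
    linear_combination hE / 2
  have hSJ : (∑ x ∈ Finset.powersetCard r (Finset.range (r + s)), ((sumJB r t x : ℕ) : ℝ))
      = (2 * (∑ x ∈ Finset.range t, (x : ℝ) * ((nres r s t x : ℕ) : ℝ))
            * (((r + s - 1).choose (r - 1) : ℕ) : ℝ)
          + t * (∑ x ∈ Finset.range t, ((nres r s t x : ℕ) : ℝ) * ((nres r s t x - 1 : ℕ) : ℝ))
            * (((r + s - 2).choose (r - 2) : ℕ) : ℝ)) / 2 := by
    linear_combination hA / 2
  rw [hSJ, hg, hc2', hc1', hP']
  field_simp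
  ring

lemma nres_bounds {r s t i : ℕ} (ht0 : 0 < t) (hi : i < t) (hN : 1 ≤ r + s) :
    r + s ≤ t * nres r s t i + i + t ∧ t * nres r s t i + i + 1 ≤ r + s + t := by
  unfold nres
  have h1 : (r + s + t - 1 - i) / t * t ≤ r + s + t - 1 - i :=
    Nat.div_mul_le_self _ _
  have h2 : (r + s + t - 1 - i) < ((r + s + t - 1 - i) / t + 1) * t := by
    rw [← Nat.div_lt_iff_lt_mul ht0]
    exact Nat.lt_succ_self _
  have h3 : ((r + s + t - 1 - i) / t + 1) * t = (r + s + t - 1 - i) / t * t + t := by ring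
  have h4 : t * ((r + s + t - 1 - i) / t) = (r + s + t - 1 - i) / t * t := by ring
  rw [h4]
  generalize (r + s + t - 1 - i) / t * t = y at *
  omega

lemma tS1_bounds {r s t : ℕ} (ht0 : 0 < t) (hN : 1 ≤ r + s) :
    t.choose 2 * (r + s) ≤ t * (∑ i ∈ range t, i * nres r s t i) + 2 * (t * t * t) ∧
    t * (∑ i ∈ range t, i * nres r s t i) ≤ t.choose 2 * (r + s) + 2 * (t * t * t) := by
  have hsum : ∑ i ∈ range t, i = t.choose 2 := by
    rw [Finset.sum_range_id, Nat.choose_two_right]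
  have hmulsum : t * (∑ i ∈ range t, i * nres r s t i)
      = ∑ i ∈ range t, i * (t * nres r s t i) := by
    rw [Finset.mul_sum]
    exact Finset.sum_congr rfl fun i _ => by ring
  have hCN : t.choose 2 * (r + s) = ∑ i ∈ range t, i * (r + s) := by
    rw [← hsum, Finset.sum_mul]
  have hslack : ∑ _i ∈ range t, (t * t + t * t) = 2 * (t * t * t) := by
    rw [Finset.sum_const, Finset.card_range, smul_eq_mul]; ring
  constructor
  · calc t.choose 2 * (r + s) = ∑ i ∈ range t, i * (r + s) := hCN
      _ ≤ ∑ i ∈ range t, (i * (t * nres r s t i) + (t * t + t * t)) := by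
          apply Finset.sum_le_sum
          intro i hi
          have hii := Finset.mem_range.1 hi
          have hb := (nres_bounds ht0 hii hN).1
          calc i * (r + s) ≤ i * (t * nres r s t i + i + t) := Nat.mul_le_mul_left i hb
            _ = i * (t * nres r s t i) + i * i + i * t := by ring
            _ ≤ i * (t * nres r s t i) + (t * t + t * t) := by
                have e1 : i * i ≤ t * t := Nat.mul_le_mul hii.le hii.le
                have e2 : i * t ≤ t * t := Nat.mul_le_mul_right t hii.le
                calc i * (t * nres r s t i) + i * i + i * t
                    ≤ i * (t * nres r s t i) + t * t + t * t :=
                      Nat.add_le_add (Nat.add_le_add_left e1 _) e2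
                  _ = i * (t * nres r s t i) + (t * t + t * t) := by
                      rw [Nat.add_assoc]
      _ = t * (∑ i ∈ range t, i * nres r s t i) + 2 * (t * t * t) := by
          rw [Finset.sum_add_distrib, hslack, hmulsum]
  · calc t * (∑ i ∈ range t, i * nres r s t i) = ∑ i ∈ range t, i * (t * nres r s t i) :=
          hmulsum
      _ ≤ ∑ i ∈ range t, (i * (r + s) + (t * t + t * t)) := by
          apply Finset.sum_le_sum
          intro i hi
          have hii := Finset.mem_range.1 hi
          have hb := (nres_bounds ht0 hii hN).2
          calc i * (t * nres r s t i) ≤ i * (r + s + t) := by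
                apply Nat.mul_le_mul_left i
                omega
            _ = i * (r + s) + i * t := by ring
            _ ≤ i * (r + s) + (t * t + t * t) := by
                have e2 : i * t ≤ t * t := Nat.mul_le_mul_right t hii.le
                exact Nat.add_le_add_left (e2.trans (Nat.le_add_right _ _)) _
      _ = t.choose 2 * (r + s) + 2 * (t * t * t) := by
          rw [Finset.sum_add_distrib, hslack, ← hCN]

open Filter in
/-- As `r, s → ∞` with `s/r → κ > 0`, the expectation of `t·|core_t(λ)|/r`
for a uniformly random `λ ∈ Par_{r,s}` converges to `C(t,2) κ/(1+κ)`. -/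
theorem expected_scaled_core_size_limit (t : ℕ) (ht : 2 ≤ t) (κ : ℝ) (hκ : 0 < κ)
    (r s : ℕ → ℕ) (hr : ∀ k, 1 ≤ r k) (hs : ∀ k, 1 ≤ s k)
    (hrlim : Filter.Tendsto r Filter.atTop Filter.atTop)
    (hslim : Filter.Tendsto s Filter.atTop Filter.atTop)
    (hratio : Filter.Tendsto (fun k => (s k : ℝ) / (r k : ℝ)) Filter.atTop (nhds κ)) :
    Filter.Tendsto
      (fun k => ((t : ℝ) / (r k : ℝ)) * ((1 / ((r k + s k).choose (r k) : ℝ)) *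
        ∑ᶠ lam ∈ {lam : Fin (r k) → ℕ | IsRectPartition (r k) (s k) lam},
          (coreSize (r k) t lam : ℝ)))
      Filter.atTop
      (nhds ((t.choose 2 : ℝ) * (κ / (1 + κ)))) := by
  
  have ht0 : 0 < t := by omega
  have hr_at : Tendsto (fun k => (r k : ℝ)) atTop atTop :=
    tendsto_natCast_atTop_atTop.comp hrlim
  have hs_at : Tendsto (fun k => (s k : ℝ)) atTop atTop :=
    tendsto_natCast_atTop_atTop.comp hslim
  have hN_at : Tendsto (fun k => (r k : ℝ) + s k) atTop atTop := hr_at.atTop_add_atTop hs_at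
  have hrpos : ∀ k, (0 : ℝ) < (r k : ℝ) := fun k => by exact_mod_cast hr k
  have hspos : ∀ k, (0 : ℝ) < (s k : ℝ) := fun k => by exact_mod_cast hs k
  -- first factor
  have h1 : Tendsto (fun k => (t : ℝ)
        * ((∑ i ∈ range t, i * nres (r k) (s k) t i : ℕ) : ℝ) / ((r k : ℝ) + s k))
      atTop (nhds (t.choose 2 : ℝ)) := by
    have hzero : Tendsto (fun k => (t : ℝ)
          * ((∑ i ∈ range t, i * nres (r k) (s k) t i : ℕ) : ℝ) / ((r k : ℝ) + s k)
          - (t.choose 2 : ℝ)) atTop (nhds 0) := by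
      apply squeeze_zero_norm (a := fun k => (2 : ℝ) * (t * t * t) / ((r k : ℝ) + s k))
      · intro k
        have hNn : 1 ≤ r k + s k := by have := hr k; omega
        obtain ⟨A1, A2⟩ := tS1_bounds (r := r k) (s := s k) ht0 hNn
        have A1' : (t.choose 2 : ℝ) * ((r k : ℝ) + s k)
            ≤ (t : ℝ) * ((∑ i ∈ range t, i * nres (r k) (s k) t i : ℕ) : ℝ)
              + (2 : ℝ) * (t * t * t) := by exact_mod_cast A1
        have A2' : (t : ℝ) * ((∑ i ∈ range t, i * nres (r k) (s k) t i : ℕ) : ℝ)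
            ≤ (t.choose 2 : ℝ) * ((r k : ℝ) + s k) + (2 : ℝ) * (t * t * t) := by
          exact_mod_cast A2
        have hNpos : (0 : ℝ) < (r k : ℝ) + s k := by
          have := hrpos k; have := hspos k; linarith
        have heq : (t : ℝ) * ((∑ i ∈ range t, i * nres (r k) (s k) t i : ℕ) : ℝ)
              / ((r k : ℝ) + s k) - (t.choose 2 : ℝ)
            = ((t : ℝ) * ((∑ i ∈ range t, i * nres (r k) (s k) t i : ℕ) : ℝ)
                - (t.choose 2 : ℝ) * ((r k : ℝ) + s k)) / ((r k : ℝ) + s k) := by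
          field_simp
          try ring
        rw [heq, Real.norm_eq_abs, abs_div, abs_of_pos hNpos]
        gcongr
        rw [abs_le]
        constructor <;> linarith
      · exact Tendsto.div_atTop tendsto_const_nhds hN_at
    have h := hzero.add_const ((t.choose 2 : ℝ))
    simp only [sub_add_cancel, zero_add] at h
    exact h
  -- second factor
  have hinv : Tendsto (fun k => ((r k : ℝ))⁻¹) atTop (nhds 0) :=
    hr_at.inv_tendsto_atTop
  have hden : Tendsto (fun k => ((r k : ℝ) + s k - 1) / (r k : ℝ)) atTop
      (nhds (1 + κ)) := by
    have hval : ∀ k, (1 : ℝ) + (s k : ℝ) / (r k : ℝ) - ((r k : ℝ))⁻¹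
        = ((r k : ℝ) + s k - 1) / (r k : ℝ) := by
      intro k
      have : (r k : ℝ) ≠ 0 := (hrpos k).ne'
      field_simp
      try ring
    have h := ((tendsto_const_nhds (x := (1 : ℝ))).add hratio).sub hinv
    rw [show (1 : ℝ) + κ - 0 = 1 + κ from by ring] at h
    exact h.congr hval
  have h2 : Tendsto (fun k => (s k : ℝ) / ((r k : ℝ) + s k - 1)) atTop
      (nhds (κ / (1 + κ))) := by
    have hne : (1 : ℝ) + κ ≠ 0 := by positivity
    have h := hratio.div hden hne
    apply h.congr
    intro k
    have hrk0 : (r k : ℝ) ≠ 0 := (hrpos k).ne'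
    have hN1 : ((r k : ℝ) + s k - 1) ≠ 0 := by
      have := hrpos k; have h2 := hspos k
      have : (1 : ℝ) ≤ (r k : ℝ) := by exact_mod_cast hr k
      have : (1 : ℝ) ≤ (s k : ℝ) := by exact_mod_cast hs k
      nlinarith [hrpos k, hspos k]
    simp only [Pi.div_apply]
    field_simp
  have hmain := h1.mul h2
  apply hmain.congr'
  filter_upwards [hrlim.eventually_ge_atTop 2] with k hk
  exact (expectation_formula ht hk (hs k)).symm
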